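/- For nonnegative integers α ≤ β with β ≥ 1, σ > 2, L > 0, and r ∈ ℝ² with |r| ≤ (3/4)·√(α²+β²)/L, the sum over nonzero lattice points J ∈ (L⁻¹ℤ)² of ⟨r + αJ + βJ⊥⟩^{-σ} is bounded by C·min(L²/β², L^σ/β^σ), where ⟨x⟩ = √(1+|x|²), J⊥ is the rotation of J by π/2, and C depends only on σ. -/

import Mathlib

set_option maxHeartbeats 1000000


open MeasureTheory
noncomputable section

abbrev E2 := EuclideanSpace ℝ (Fin 2)

/-- Counterclockwise rotation by π/2 in the plane. -/
def rot (z : E2) : E2 := !₂[-(z 1), z 0]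

/-- Japanese bracket ⟨x⟩ = √(1+|x|²). -/
def jap (x : E2) : ℝ := Real.sqrt (1 + ‖x‖^2)

/-- The lattice point L⁻¹·(j₁, j₂) of the rescaled lattice ℤ²_L = L⁻¹ℤ². -/
def latt (L : ℝ) (j : ℤ × ℤ) : E2 := !₂[(j.1 : ℝ)/L, (j.2 : ℝ)/L]

namespace Stmt0Aux


/-- Bernoulli telescoping step. -/
lemma step {p m : ℝ} (hp : 1 < p) (hm : 1 ≤ m) :
    (p - 1) * (m + 1) ^ (-p) ≤ m ^ (1 - p) - (m + 1) ^ (1 - p) := by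
  have hm0 : (0:ℝ) < m := by linarith
  have hm1 : (0:ℝ) < m + 1 := by linarith
  have h1m : (0:ℝ) ≤ 1/m := by positivity
  have hB : 1 + p * (1/m) ≤ (1 + 1/m) ^ p :=
    one_add_mul_self_le_rpow_one_add (by linarith) hp.le
  have h1 : (1:ℝ) + 1/m = (m+1)/m := by field_simp
  have h2 : ((m+1)/m) ^ p = (m+1)^p / m^p := Real.div_rpow hm1.le hm0.le p
  have hmp : (0:ℝ) < m ^ p := Real.rpow_pos_of_pos hm0 _
  have hmp1 : (0:ℝ) < (m+1) ^ p := Real.rpow_pos_of_pos hm1 _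
  have key : (m + p) * m^p ≤ m * (m+1)^p := by
    have h3 := mul_le_mul_of_nonneg_right hB (by positivity : (0:ℝ) ≤ m * m^p)
    rw [h1, h2] at h3
    calc (m+p) * m^p = (1 + p*(1/m)) * (m * m^p) := by field_simp
      _ ≤ (m+1)^p / m^p * (m * m^p) := h3
      _ = m * (m+1)^p := by field_simp
  have hA1 : (m+1)^(1-p) = (m+1) * (m+1)^(-p) := by
    rw [show (1:ℝ)-p = 1 + (-p) by ring, Real.rpow_add hm1, Real.rpow_one]
  have hA2 : m^(1-p) = m * m^(-p) := by
    rw [show (1:ℝ)-p = 1 + (-p) by ring, Real.rpow_add hm0, Real.rpow_one]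
  have h4 : (m + p) * (m+1)^(-p) ≤ m * m^(-p) := by
    rw [Real.rpow_neg hm1.le, Real.rpow_neg hm0.le, ← div_eq_mul_inv, ← div_eq_mul_inv,
      div_le_div_iff₀ hmp1 hmp]
    exact key
  rw [hA1, hA2]
  linarith

/-- Tail of the p-series. -/
lemma tsum_tail_le {p : ℝ} (hp : 1 < p) {N : ℕ} (hN : 1 ≤ N) :
    ∑' n : ℕ, ((N:ℝ) + 1 + n) ^ (-p) ≤ (N:ℝ) ^ (1-p) / (p-1) := by
  have hp1 : (0:ℝ) < p - 1 := by linarith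
  have hN1 : (1:ℝ) ≤ (N:ℝ) := by exact_mod_cast hN
  apply Real.tsum_le_of_sum_range_le (fun n => by positivity)
  intro n
  set f : ℕ → ℝ := fun i => ((N:ℝ)+i)^(1-p) with hf
  have hterm : ∀ i : ℕ, ((N:ℝ)+1+i)^(-p) ≤ (f i - f (i+1)) / (p-1) := by
    intro i
    have hi0 : (0:ℝ) ≤ (i:ℝ) := by positivity
    have hm : (1:ℝ) ≤ (N:ℝ) + i := by linarith
    have hstep := step hp hm
    have e1 : ((N:ℝ)+i)+1 = (N:ℝ)+1+i := by ring
    have e2 : f (i+1) = (((N:ℝ)+i)+1)^(1-p) := by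
      simp only [hf]; congr 1; push_cast; ring
    rw [le_div_iff₀ hp1, e2, ← e1]
    simp only [hf]
    linarith
  calc ∑ i ∈ Finset.range n, ((N:ℝ)+1+i)^(-p)
      ≤ ∑ i ∈ Finset.range n, (f i - f (i+1)) / (p-1) :=
        Finset.sum_le_sum fun i _ => hterm i
    _ = (∑ i ∈ Finset.range n, (f i - f (i+1))) / (p-1) := by
        rw [Finset.sum_div]
    _ = (f 0 - f n) / (p-1) := by rw [Finset.sum_range_sub' f n]
    _ ≤ f 0 / (p-1) := by
        have : (0:ℝ) ≤ f n := Real.rpow_nonneg (by positivity) _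
        gcongr
        linarith
    _ = (N:ℝ) ^ (1-p) / (p-1) := by simp [hf]



lemma term_le {p c t : ℝ} (hc : 0 < c) (hp : 0 < p) (ht : 0 < t) :
    (1 + c^2*t^2)^(-(p/2)) ≤ c^(-p) * t^(-p) := by
  have hct : 0 < (c*t)^2 := by positivity
  have h1 : (c*t)^2 ≤ 1 + c^2*t^2 := by nlinarith
  have h2 : (1 + c^2*t^2)^(-(p/2)) ≤ ((c*t)^2)^(-(p/2)) :=
    Real.rpow_le_rpow_of_nonpos hct h1 (by linarith)
  have h3 : (((c*t)^2 : ℝ))^(-(p/2)) = (c*t)^(-p) := by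
    rw [← Real.rpow_natCast (c*t) 2, ← Real.rpow_mul (by positivity)]
    congr 1; push_cast; ring
  calc (1+c^2*t^2)^(-(p/2)) ≤ ((c*t)^2)^(-(p/2)) := h2
    _ = (c*t)^(-p) := h3
    _ = c^(-p)*t^(-p) := Real.mul_rpow hc.le ht.le

lemma summable_shift {p : ℝ} (hp : 1 < p) : Summable (fun n : ℕ => ((n:ℝ)+1)^(-p)) := by
  have h := (Real.summable_nat_rpow (p := -p)).2 (by linarith)
  exact ((summable_nat_add_iff 1).2 h).congr (fun n => by push_cast; norm_num)

lemma G_summable {p c : ℝ} (hp : 1 < p) (hc : 0 < c) :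
    Summable (fun n : ℕ => (1 + c^2*((n:ℝ)+1)^2)^(-(p/2))) := by
  apply Summable.of_nonneg_of_le (fun n => by positivity)
    (fun n => term_le hc (by linarith) (by positivity))
  exact (summable_shift hp).mul_left (c^(-p))

lemma G_le_of_one_le {p c : ℝ} (hp : 1 < p) (hc : 1 ≤ c) :
    (∑' n : ℕ, (1 + c^2*((n:ℝ)+1)^2)^(-(p/2))) ≤ ∑' n : ℕ, ((n:ℝ)+1)^(-p) := by
  have hc0 : (0:ℝ) < c := by linarith
  have h1 : (∑' n : ℕ, (1 + c^2*((n:ℝ)+1)^2)^(-(p/2)))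
      ≤ ∑' n : ℕ, c^(-p) * ((n:ℝ)+1)^(-p) := by
    exact Summable.tsum_le_tsum (fun n => term_le hc0 (by linarith) (by positivity))
      (G_summable hp hc0) ((summable_shift hp).mul_left _)
  have h2 : ∑' n : ℕ, c^(-p) * ((n:ℝ)+1)^(-p) = c^(-p) * ∑' n : ℕ, ((n:ℝ)+1)^(-p) :=
    tsum_mul_left
  have h3 : c^(-p) ≤ 1 := Real.rpow_le_one_of_one_le_of_nonpos hc (by linarith)
  have h4 : (0:ℝ) ≤ ∑' n : ℕ, ((n:ℝ)+1)^(-p) :=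
    tsum_nonneg (fun n => Real.rpow_nonneg (by positivity) _)
  calc _ ≤ c^(-p) * ∑' n : ℕ, ((n:ℝ)+1)^(-p) := h2 ▸ h1
    _ ≤ 1 * ∑' n : ℕ, ((n:ℝ)+1)^(-p) := mul_le_mul_of_nonneg_right h3 h4
    _ = _ := one_mul _

lemma G_le_of_le_one {p c : ℝ} (hp : 1 < p) (hc0 : 0 < c) (hc : c ≤ 1) :
    (∑' n : ℕ, (1 + c^2*((n:ℝ)+1)^2)^(-(p/2))) ≤ (2 + 1/(p-1)) / c := by
  have hp1 : (0:ℝ) < p - 1 := by linarith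
  set N := ⌈1/c⌉₊ with hNdef
  have hinv1 : (1:ℝ) ≤ 1/c := by rw [le_div_iff₀ hc0]; linarith
  have hN1 : 1 ≤ N := Nat.one_le_ceil_iff.2 (by positivity)
  have hNc : 1/c ≤ (N:ℝ) := Nat.le_ceil _
  have hNc2 : (N:ℝ) ≤ 1/c + 1 := le_of_lt (Nat.ceil_lt_add_one (by positivity))
  have hsum := G_summable (p := p) (c := c) hp hc0
  rw [← Summable.sum_add_tsum_nat_add N hsum]
  have head : ∑ i ∈ Finset.range N, (1 + c^2*((i:ℝ)+1)^2)^(-(p/2)) ≤ (N:ℝ) := by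
    calc ∑ i ∈ Finset.range N, (1 + c^2*((i:ℝ)+1)^2)^(-(p/2))
        ≤ ∑ _i ∈ Finset.range N, (1:ℝ) := by
          apply Finset.sum_le_sum
          intro i _
          have h0 : (0:ℝ) ≤ c^2*((i:ℝ)+1)^2 := by positivity
          exact Real.rpow_le_one_of_one_le_of_nonpos (by linarith) (by linarith)
      _ = (N:ℝ) := by simp
  have tail : ∑' i : ℕ, (1 + c^2*(((i+N:ℕ):ℝ)+1)^2)^(-(p/2)) ≤ (1/(p-1)) / c := by
    have hsum2 : Summable (fun i : ℕ => ((N:ℝ)+1+i)^(-p)) := by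
      refine ((summable_nat_add_iff N).2 (summable_shift hp)).congr (fun i => ?_)
      congr 1; push_cast; ring
    have hterm : ∀ i : ℕ,
        (1 + c^2*(((i+N:ℕ):ℝ)+1)^2)^(-(p/2)) ≤ c^(-p) * ((N:ℝ)+1+i)^(-p) := by
      intro i
      have e : ((i+N:ℕ):ℝ)+1 = (N:ℝ)+1+i := by push_cast; ring
      rw [e]
      have : (0:ℝ) < (N:ℝ)+1+i := by positivity
      exact term_le hc0 (by linarith) this
    have h5 : (N:ℝ)^(1-p) ≤ c^(p-1) := by
      calc (N:ℝ)^(1-p) ≤ (1/c)^(1-p) :=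
          Real.rpow_le_rpow_of_nonpos (by positivity) hNc (by linarith)
        _ = c^(p-1) := by
            rw [one_div, Real.inv_rpow hc0.le, ← Real.rpow_neg hc0.le]
            congr 1; ring
    calc ∑' i : ℕ, (1 + c^2*(((i+N:ℕ):ℝ)+1)^2)^(-(p/2))
        ≤ ∑' i : ℕ, c^(-p) * ((N:ℝ)+1+i)^(-p) := by
          exact Summable.tsum_le_tsum hterm ((summable_nat_add_iff N).2 hsum) (hsum2.mul_left _)
      _ = c^(-p) * ∑' i : ℕ, ((N:ℝ)+1+i)^(-p) := tsum_mul_left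
      _ ≤ c^(-p) * ((N:ℝ)^(1-p)/(p-1)) := by
          apply mul_le_mul_of_nonneg_left (tsum_tail_le hp hN1)
            (Real.rpow_nonneg hc0.le _)
      _ ≤ c^(-p) * (c^(p-1)/(p-1)) := by
          apply mul_le_mul_of_nonneg_left _ (Real.rpow_nonneg hc0.le _)
          gcongr
      _ = (1/(p-1)) / c := by
          rw [show c^(-p) * (c^(p-1)/(p-1)) = (c^(-p) * c^(p-1))/(p-1) from by ring,
            ← Real.rpow_add hc0, show -p + (p-1) = -1 by ring, Real.rpow_neg_one]
          field_simp
  have h2c : (N:ℝ) ≤ 2/c := by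
    have e : 2/c = 1/c + 1/c := by ring
    linarith
  calc ∑ i ∈ Finset.range N, (1 + c^2*((i:ℝ)+1)^2)^(-(p/2))
        + ∑' i : ℕ, (1 + c^2*(((i+N:ℕ):ℝ)+1)^2)^(-(p/2))
      ≤ (N:ℝ) + (1/(p-1))/c := add_le_add head tail
    _ ≤ 2/c + (1/(p-1))/c := by linarith
    _ = (2+1/(p-1))/c := by ring



lemma one_add_add_bound {q A B : ℝ} (hq : 0 < q) (hA : 0 ≤ A) (hB : 0 ≤ B) :
    (1 + A + B)^(-q) ≤ (1+A)^(-(q/2)) * (1+B)^(-(q/2)) := by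
  have hprod : (0:ℝ) < (1+A)*(1+B) := by nlinarith
  have h1 : ((1+A)*(1+B))^((1:ℝ)/2) ≤ 1 + A + B := by
    rw [← Real.sqrt_eq_rpow]
    have h2 : (1+A)*(1+B) ≤ (1+A+B)^2 := by nlinarith
    calc Real.sqrt ((1+A)*(1+B)) ≤ Real.sqrt ((1+A+B)^2) := Real.sqrt_le_sqrt h2
      _ = 1+A+B := Real.sqrt_sq (by linarith)
  have h0 : (0:ℝ) < ((1+A)*(1+B))^((1:ℝ)/2) := Real.rpow_pos_of_pos hprod _
  calc (1+A+B)^(-q) ≤ (((1+A)*(1+B))^((1:ℝ)/2))^(-q) :=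
      Real.rpow_le_rpow_of_nonpos h0 h1 (by linarith)
    _ = ((1+A)*(1+B))^(-(q/2)) := by
        rw [← Real.rpow_mul hprod.le]
        congr 1; ring
    _ = (1+A)^(-(q/2)) * (1+B)^(-(q/2)) := Real.mul_rpow (by linarith) (by linarith)

/-- The 1D factor function. -/
noncomputable def Fz (p c : ℝ) (k : ℤ) : ℝ := (1 + c^2*((k:ℝ))^2)^(-(p/2))

lemma Fz_nonneg (p c : ℝ) (k : ℤ) : 0 ≤ Fz p c k :=
  Real.rpow_nonneg (by positivity) _

lemma Fz_nat_summable {p c : ℝ} (hp : 1 < p) (hc : 0 < c) :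
    Summable (fun n : ℕ => Fz p c (n : ℤ)) := by
  apply (summable_nat_add_iff 1).1
  refine (G_summable hp hc).congr (fun n => ?_)
  unfold Fz
  norm_num

lemma Fz_neg_summable {p c : ℝ} (hp : 1 < p) (hc : 0 < c) :
    Summable (fun n : ℕ => Fz p c (-((n : ℤ)+1))) := by
  refine (G_summable hp hc).congr (fun n => ?_)
  unfold Fz
  push_cast
  ring_nf

lemma Fz_summable {p c : ℝ} (hp : 1 < p) (hc : 0 < c) :
    Summable (fun k : ℤ => Fz p c k) := by
  apply Summable.of_nat_of_neg_add_one (Fz_nat_summable hp hc)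
  exact (Fz_neg_summable hp hc).congr (fun n => by push_cast; norm_num)

lemma Fz_tsum {p c : ℝ} (hp : 1 < p) (hc : 0 < c) :
    ∑' k : ℤ, Fz p c k
      = 1 + 2 * ∑' n : ℕ, (1 + c^2*((n:ℝ)+1)^2)^(-(p/2)) := by
  have h1 := Fz_nat_summable hp hc
  have h2 : Summable (fun n : ℕ => Fz p c (-((n:ℕ)+1))) :=
    (Fz_neg_summable hp hc).congr (fun n => by push_cast; norm_num)
  rw [tsum_of_nat_of_neg_add_one h1 h2]
  have e1 : ∑' n : ℕ, Fz p c (n:ℤ)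
      = 1 + ∑' n : ℕ, (1 + c^2*((n:ℝ)+1)^2)^(-(p/2)) := by
    rw [Summable.tsum_eq_zero_add h1]
    congr 1
    · unfold Fz; norm_num
    · exact tsum_congr (fun n => by unfold Fz; push_cast; ring_nf)
  have e2 : ∑' n : ℕ, Fz p c (-((n:ℕ)+1))
      = ∑' n : ℕ, (1 + c^2*((n:ℝ)+1)^2)^(-(p/2)) :=
    tsum_congr (fun n => by unfold Fz; push_cast; ring_nf)
  rw [e1, e2]; ring

lemma H_summable {p c : ℝ} (hp : 1 < p) (hc : 0 < c) :
    Summable (fun x : ℤ × ℤ => Fz p c x.1 * Fz p c x.2) :=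
  Summable.mul_of_nonneg (Fz_summable hp hc) (Fz_summable hp hc)
    (fun k => Fz_nonneg p c k) (fun k => Fz_nonneg p c k)

lemma twoD {p c : ℝ} (hp : 1 < p) (hc : 0 < c) :
    ∑' j : ℤ × ℤ, (Fz p c j.1 * Fz p c j.2)
      = (1 + 2 * ∑' n : ℕ, (1 + c^2*((n:ℝ)+1)^2)^(-(p/2)))^2 := by
  have hn : Summable (fun k : ℤ => ‖Fz p c k‖) :=
    (Fz_summable hp hc).congr (fun k =>
      (by rw [Real.norm_eq_abs, abs_of_nonneg (Fz_nonneg p c k)] : ‖Fz p c k‖ = Fz p c k).symm)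
  rw [← Fz_tsum hp hc, sq]
  exact (tsum_mul_tsum_of_summable_norm hn hn).symm



lemma jap_rpow (σ : ℝ) (x : E2) : jap x ^ (-σ) = (1+‖x‖^2)^(-(σ/2)) := by
  rw [jap, Real.sqrt_eq_rpow, ← Real.rpow_mul (by positivity)]
  congr 1; ring

lemma norm_lower (a b : ℕ) (L : ℝ) (hL : 0 < L) (r : E2) (j : ℤ × ℤ) (hj : j ≠ 0)
    (hr : ‖r‖ ≤ 3/4 * Real.sqrt ((a:ℝ)^2+(b:ℝ)^2) / L) :
    Real.sqrt ((a:ℝ)^2+(b:ℝ)^2)/(4*L) * Real.sqrt (((j.1:ℝ))^2 + ((j.2:ℝ))^2)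
      ≤ ‖r + (a:ℝ) • latt L j + (b:ℝ) • rot (latt L j)‖ := by
  set s := Real.sqrt ((a:ℝ)^2+(b:ℝ)^2) with hs
  set ρ := Real.sqrt (((j.1:ℝ))^2 + ((j.2:ℝ))^2) with hρ
  set w : E2 := (a:ℝ) • latt L j + (b:ℝ) • rot (latt L j) with hw
  have hs0 : 0 ≤ s := Real.sqrt_nonneg _
  have hρ0 : 0 ≤ ρ := Real.sqrt_nonneg _
  have hs2 : s^2 = (a:ℝ)^2+(b:ℝ)^2 := Real.sq_sqrt (by positivity)
  have hρ2 : ρ^2 = ((j.1:ℝ))^2+((j.2:ℝ))^2 := Real.sq_sqrt (by positivity)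
  have hw0 : w 0 = ((a:ℝ)*(j.1:ℝ) - (b:ℝ)*(j.2:ℝ))/L := by
    simp [hw, latt, rot]
    ring
  have hw1 : w 1 = ((a:ℝ)*(j.2:ℝ) + (b:ℝ)*(j.1:ℝ))/L := by
    simp [hw, latt, rot]
    ring
  have hnw : ‖w‖ = s * ρ / L := by
    rw [EuclideanSpace.norm_eq]
    rw [Fin.sum_univ_two]
    have e : ‖w 0‖^2 + ‖w 1‖^2 = (s*ρ/L)^2 := by
      rw [Real.norm_eq_abs, Real.norm_eq_abs, sq_abs, sq_abs, hw0, hw1]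
      field_simp
      rw [hs2, hρ2]
      ring
    rw [e, Real.sqrt_sq (by positivity)]
  have hρ1 : 1 ≤ ρ := by
    have hj2 : (1:ℤ) ≤ j.1^2 + j.2^2 := by
      rcases eq_or_ne j.1 0 with h1 | h1
      · have h2 : j.2 ≠ 0 := by
          intro h2; exact hj (Prod.ext h1 h2)
        nlinarith [Int.one_le_abs h2, sq_abs j.2, sq_nonneg j.1]
      · nlinarith [Int.one_le_abs h1, sq_abs j.1, sq_nonneg j.2]
    have hj2' : (1:ℝ) ≤ ((j.1:ℝ))^2 + ((j.2:ℝ))^2 := by exact_mod_cast hj2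
    calc (1:ℝ) = Real.sqrt 1 := Real.sqrt_one.symm
      _ ≤ ρ := Real.sqrt_le_sqrt hj2'
  have htri : ‖w‖ - ‖r‖ ≤ ‖r + w‖ := by
    have h := norm_sub_le (r + w) r
    rw [add_sub_cancel_left] at h
    linarith
  have hassoc : r + (a:ℝ) • latt L j + (b:ℝ) • rot (latt L j) = r + w := by
    rw [hw, add_assoc]
  rw [hassoc]
  have hu : (0:ℝ) ≤ s/L := by positivity
  have h1 : s/L * 1 ≤ s/L * ρ := mul_le_mul_of_nonneg_left hρ1 hu
  have e1 : s*ρ/L = s/L*ρ := by ring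
  have e2 : (3:ℝ)/4*s/L = 3/4*(s/L*1) := by ring
  have e3 : s/(4*L)*ρ = 1/4*(s/L*ρ) := by ring
  have hfinal : s/(4*L)*ρ ≤ s*ρ/L - 3/4*s/L := by
    rw [e1, e3]
    nlinarith [h1]
  calc s/(4*L)*ρ ≤ s*ρ/L - 3/4*s/L := hfinal
    _ ≤ ‖r + w‖ := by rw [← hnw] at *; linarith


lemma one_le_sq_sum (j : ℤ × ℤ) (hj : j ≠ 0) : (1:ℝ) ≤ ((j.1:ℝ))^2 + ((j.2:ℝ))^2 := by
  have hj2 : (1:ℤ) ≤ j.1^2 + j.2^2 := by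
    rcases eq_or_ne j.1 0 with h1 | h1
    · have h2 : j.2 ≠ 0 := by intro h2; exact hj (Prod.ext h1 h2)
      nlinarith [Int.one_le_abs h2, sq_abs j.2, sq_nonneg j.1]
    · nlinarith [Int.one_le_abs h1, sq_abs j.1, sq_nonneg j.2]
  exact_mod_cast hj2

end Stmt0Aux

open Stmt0Aux in
/-- Lemma: for 0 ≤ α ≤ β, β ≥ 1, σ > 2, and |r| ≤ (3/4)√(α²+β²)/L, the lattice sum
Σ_{J ∈ (ℤ²_L)*} ⟨r + αJ + βJ⊥⟩^{-σ} is bounded by C·min(L²/β², L^σ/β^σ),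
with C depending only on σ. -/
theorem stmt0 (σ : ℝ) (hσ : 2 < σ) :
    ∃ C : ℝ, 0 < C ∧ ∀ (a b : ℕ) (L : ℝ) (r : E2),
      a ≤ b → 1 ≤ b → 0 < L →
      ‖r‖ ≤ (3/4) * Real.sqrt ((a : ℝ)^2 + (b : ℝ)^2) / L →
      (∑' j : {j : ℤ × ℤ // j ≠ 0},
          jap (r + (a : ℝ) • latt L j.1 + (b : ℝ) • rot (latt L j.1)) ^ (-σ))
        ≤ C * min (L^2 / (b : ℝ)^2) (L ^ σ / (b : ℝ) ^ σ) := by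
  have hp : 1 < σ/2 := by linarith
  have hp1 : (0:ℝ) < σ/2 - 1 := by linarith
  set p : ℝ := σ/2 with hpdef
  set Z : ℝ := ∑' n : ℕ, ((n:ℝ)+1)^(-p) with hZdef
  have hZ0 : 0 ≤ Z := tsum_nonneg fun n => Real.rpow_nonneg (by positivity) _
  set D : ℝ := 2 + 1/(p-1) with hDdef
  have hD0 : 0 < D := by
    have : 0 < 1/(p-1) := by positivity
    rw [hDdef]; linarith
  have h4σ : (1:ℝ) ≤ (4:ℝ)^σ := by
    calc (1:ℝ) = (4:ℝ)^(0:ℝ) := (Real.rpow_zero 4).symm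
      _ ≤ (4:ℝ)^σ := Real.rpow_le_rpow_of_exponent_le (by norm_num) (by linarith)
  have h4σ0 : (0:ℝ) < (4:ℝ)^σ := by positivity
  have h2p0 : (0:ℝ) < (2:ℝ)^p := by positivity
  set K1 : ℝ := 16*(1+2*D)^2 with hK1def
  set K2 : ℝ := (2:ℝ)^p*(1+2*Z)^2 with hK2def
  have hK10 : 0 < K1 := by rw [hK1def]; positivity
  have hK20 : 0 < K2 := by
    rw [hK2def]
    have : (0:ℝ) < (1+2*Z)^2 := by positivity
    positivity
  refine ⟨K1 * 4^σ + K2 * 4^σ + 1, by positivity, ?_⟩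
  intro a b L r hab hb1 hL hr
  set C : ℝ := K1 * 4^σ + K2 * 4^σ + 1 with hCdef
  have hC1 : K1 ≤ C := by
    rw [hCdef]
    have h1 : K1 ≤ K1 * 4^σ := le_mul_of_one_le_right hK10.le h4σ
    have h2 : 0 < K2 * 4^σ := mul_pos hK20 h4σ0
    linarith
  have hC2 : K1 * 4^σ ≤ C := by
    rw [hCdef]
    have h2 : 0 < K2 * 4^σ := mul_pos hK20 h4σ0
    linarith
  have hC3 : K2 * 4^σ ≤ C := by
    rw [hCdef]
    have h2 : 0 < K1 * 4^σ := mul_pos hK10 h4σ0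
    linarith
  have hb0 : (0:ℝ) < (b:ℝ) := by
    have : (1:ℝ) ≤ (b:ℝ) := by exact_mod_cast hb1
    linarith
  have hab' : (a:ℝ) ≤ (b:ℝ) := by exact_mod_cast hab
  set s : ℝ := Real.sqrt ((a:ℝ)^2+(b:ℝ)^2) with hs
  have hbs : (b:ℝ) ≤ s := by
    rw [hs]
    calc (b:ℝ) = Real.sqrt ((b:ℝ)^2) := (Real.sqrt_sq hb0.le).symm
      _ ≤ _ := Real.sqrt_le_sqrt (by nlinarith [sq_nonneg (a:ℝ)])
  have hs0 : 0 < s := lt_of_lt_of_le hb0 hbs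
  have hs2b : s ≤ 2*(b:ℝ) := by
    rw [hs]
    have ha0 : (0:ℝ) ≤ (a:ℝ) := by positivity
    calc Real.sqrt ((a:ℝ)^2+(b:ℝ)^2) ≤ Real.sqrt ((2*(b:ℝ))^2) :=
        Real.sqrt_le_sqrt (by nlinarith [hab', ha0, sq_nonneg (b:ℝ)])
      _ = 2*(b:ℝ) := Real.sqrt_sq (by positivity)
  set c : ℝ := s/(4*L) with hc
  have hc0 : 0 < c := by rw [hc]; positivity
  have hcb : (b:ℝ)/(4*L) ≤ c := by
    rw [hc]; gcongr
  -- nonnegativity of the summand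
  have hg0 : ∀ j : ℤ × ℤ,
      0 ≤ jap (r + (a : ℝ) • latt L j + (b : ℝ) • rot (latt L j)) ^ (-σ) :=
    fun j => Real.rpow_nonneg (Real.sqrt_nonneg _) _
  -- pointwise bound 1
  have hg : ∀ j : ℤ × ℤ, j ≠ 0 →
      jap (r + (a : ℝ) • latt L j + (b : ℝ) • rot (latt L j)) ^ (-σ)
        ≤ Fz p c j.1 * Fz p c j.2 := by
    intro j hj
    have hnl := norm_lower a b L hL r j hj hr
    rw [← hs, ← hc] at hnl
    set v : E2 := r + (a : ℝ) • latt L j + (b : ℝ) • rot (latt L j) with hv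
    have hρ2 : (Real.sqrt (((j.1:ℝ))^2+((j.2:ℝ))^2))^2 = ((j.1:ℝ))^2+((j.2:ℝ))^2 :=
      Real.sq_sqrt (by positivity)
    have hlow : c^2 * (((j.1:ℝ))^2+((j.2:ℝ))^2) ≤ ‖v‖^2 := by
      have h2 := pow_le_pow_left₀ (by positivity) hnl 2
      calc c^2 * (((j.1:ℝ))^2+((j.2:ℝ))^2)
          = (c * Real.sqrt (((j.1:ℝ))^2+((j.2:ℝ))^2))^2 := by rw [mul_pow, hρ2]
        _ ≤ ‖v‖^2 := h2
    have e : c^2*(((j.1:ℝ))^2+((j.2:ℝ))^2) = c^2*((j.1:ℝ))^2 + c^2*((j.2:ℝ))^2 := by ring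
    have hbase : 1 + c^2*((j.1:ℝ))^2 + c^2*((j.2:ℝ))^2 ≤ 1 + ‖v‖^2 := by
      rw [e] at hlow; linarith
    rw [jap_rpow, show σ/2 = p from hpdef.symm]
    calc (1+‖v‖^2)^(-p) ≤ (1 + c^2*((j.1:ℝ))^2 + c^2*((j.2:ℝ))^2)^(-p) :=
        Real.rpow_le_rpow_of_nonpos (by positivity) hbase (by rw [hpdef]; linarith)
      _ ≤ (1+c^2*((j.1:ℝ))^2)^(-(p/2)) * (1+c^2*((j.2:ℝ))^2)^(-(p/2)) :=
          one_add_add_bound (by rw [hpdef]; linarith) (by positivity) (by positivity)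
      _ = Fz p c j.1 * Fz p c j.2 := rfl
  -- pointwise bound 2 (used when 1 ≤ c)
  have hg2 : 1 ≤ c → ∀ j : ℤ × ℤ, j ≠ 0 →
      jap (r + (a : ℝ) • latt L j + (b : ℝ) • rot (latt L j)) ^ (-σ)
        ≤ 2^p * c^(-σ) * (Fz p 1 j.1 * Fz p 1 j.2) := by
    intro hc1 j hj
    have hnl := norm_lower a b L hL r j hj hr
    rw [← hs, ← hc] at hnl
    set v : E2 := r + (a : ℝ) • latt L j + (b : ℝ) • rot (latt L j) with hv
    have hρ2 : (Real.sqrt (((j.1:ℝ))^2+((j.2:ℝ))^2))^2 = ((j.1:ℝ))^2+((j.2:ℝ))^2 :=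
      Real.sq_sqrt (by positivity)
    have hlow : c^2 * (((j.1:ℝ))^2+((j.2:ℝ))^2) ≤ ‖v‖^2 := by
      have h2 := pow_le_pow_left₀ (by positivity) hnl 2
      calc c^2 * (((j.1:ℝ))^2+((j.2:ℝ))^2)
          = (c * Real.sqrt (((j.1:ℝ))^2+((j.2:ℝ))^2))^2 := by rw [mul_pow, hρ2]
        _ ≤ ‖v‖^2 := h2
    have hss : (1:ℝ) ≤ ((j.1:ℝ))^2+((j.2:ℝ))^2 := one_le_sq_sum j hj
    have hmid : c^2/2 * (1 + (((j.1:ℝ))^2+((j.2:ℝ))^2)) ≤ 1 + ‖v‖^2 := by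
      have hv0 : 0 ≤ ‖v‖^2 := sq_nonneg _
      have h1 : c^2 * 1 ≤ c^2 * (((j.1:ℝ))^2+((j.2:ℝ))^2) :=
        mul_le_mul_of_nonneg_left hss (sq_nonneg c)
      linarith [hlow]
    have hmid0 : (0:ℝ) < c^2/2 * (1 + (((j.1:ℝ))^2+((j.2:ℝ))^2)) := by positivity
    rw [jap_rpow, show σ/2 = p from hpdef.symm]
    have step1 : (1+‖v‖^2)^(-p) ≤ (c^2/2 * (1 + (((j.1:ℝ))^2+((j.2:ℝ))^2)))^(-p) :=
      Real.rpow_le_rpow_of_nonpos hmid0 hmid (by rw [hpdef]; linarith)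
    have step2 : (c^2/2 * (1 + (((j.1:ℝ))^2+((j.2:ℝ))^2)))^(-p)
        = (c^2/2 : ℝ)^(-p) * (1 + (((j.1:ℝ))^2+((j.2:ℝ))^2))^(-p) :=
      Real.mul_rpow (by positivity) (by positivity)
    have step3 : (c^2/2 : ℝ)^(-p) = 2^p * c^(-σ) := by
      rw [div_eq_mul_inv, Real.mul_rpow (by positivity) (by norm_num)]
      have e1 : ((2:ℝ)⁻¹)^(-p) = 2^p := by
        rw [Real.inv_rpow (by norm_num), ← Real.rpow_neg (by norm_num)]
        norm_num
      have e2 : ((c^2 : ℝ))^(-p) = c^(-σ) := by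
        rw [← Real.rpow_natCast c 2, ← Real.rpow_mul hc0.le]
        congr 1
        rw [hpdef]; push_cast; ring
      rw [e1, e2]; ring
    have step4 : (1 + (((j.1:ℝ))^2+((j.2:ℝ))^2))^(-p)
        ≤ Fz p 1 j.1 * Fz p 1 j.2 := by
      have h := one_add_add_bound (q := p) (A := ((j.1:ℝ))^2) (B := ((j.2:ℝ))^2)
        (by rw [hpdef]; linarith) (by positivity) (by positivity)
      have e3 : (1:ℝ) + (((j.1:ℝ))^2+((j.2:ℝ))^2) = 1 + ((j.1:ℝ))^2 + ((j.2:ℝ))^2 := by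
        ring
      rw [e3]
      refine h.trans_eq ?_
      unfold Fz; norm_num
    calc (1+‖v‖^2)^(-p)
        ≤ (c^2/2 : ℝ)^(-p) * (1 + (((j.1:ℝ))^2+((j.2:ℝ))^2))^(-p) := by
          rw [← step2]; exact step1
      _ ≤ (c^2/2 : ℝ)^(-p) * (Fz p 1 j.1 * Fz p 1 j.2) :=
          mul_le_mul_of_nonneg_left step4 (Real.rpow_nonneg (by positivity) _)
      _ = 2^p * c^(-σ) * (Fz p 1 j.1 * Fz p 1 j.2) := by rw [step3]
  have hx0 : (0:ℝ) < L/(b:ℝ) := by positivity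
  have eA : L^2/(b:ℝ)^2 = (L/(b:ℝ))^2 := (div_pow L (b:ℝ) 2).symm
  have eB : L^σ/(b:ℝ)^σ = (L/(b:ℝ))^σ := (Real.div_rpow hL.le hb0.le σ).symm
  have hA0 : (0:ℝ) ≤ L^2/(b:ℝ)^2 := by positivity
  have hB0 : (0:ℝ) ≤ L^σ/(b:ℝ)^σ := by
    rw [eB]; exact Real.rpow_nonneg hx0.le σ
  have h42 : (L/(b:ℝ))^(2:ℕ) = (L/(b:ℝ))^((2:ℝ)) := by
    rw [← Real.rpow_natCast (L/(b:ℝ)) 2]; norm_num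
  rcases le_or_gt c 1 with hcle | hcgt
  · -- case c ≤ 1
    have hH := H_summable (p := p) (c := c) hp hc0
    have hHs : Summable (fun j : {j : ℤ × ℤ // j ≠ 0} => Fz p c j.1.1 * Fz p c j.1.2) :=
      hH.subtype {j : ℤ × ℤ | j ≠ 0}
    have hgS : Summable (fun j : {j : ℤ × ℤ // j ≠ 0} =>
        jap (r + (a : ℝ) • latt L j.1 + (b : ℝ) • rot (latt L j.1)) ^ (-σ)) :=
      Summable.of_nonneg_of_le (fun j => hg0 j.1) (fun j => hg j.1 j.2) hHs
    have step1 : (∑' j : {j : ℤ × ℤ // j ≠ 0},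
        jap (r + (a : ℝ) • latt L j.1 + (b : ℝ) • rot (latt L j.1)) ^ (-σ))
        ≤ ∑' j : {j : ℤ × ℤ // j ≠ 0}, Fz p c j.1.1 * Fz p c j.1.2 :=
      Summable.tsum_le_tsum (fun j => hg j.1 j.2) hgS hHs
    have step2 : (∑' j : {j : ℤ × ℤ // j ≠ 0}, Fz p c j.1.1 * Fz p c j.1.2)
        ≤ ∑' j : ℤ × ℤ, Fz p c j.1 * Fz p c j.2 :=
      Summable.tsum_subtype_le (fun j : ℤ × ℤ => Fz p c j.1 * Fz p c j.2) {j | j ≠ 0}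
        (fun j => mul_nonneg (Fz_nonneg _ _ _) (Fz_nonneg _ _ _)) hH
    set G : ℝ := ∑' n : ℕ, (1 + c^2*((n:ℝ)+1)^2)^(-(p/2)) with hGdef
    have hG0 : 0 ≤ G := by
      rw [hGdef]
      exact tsum_nonneg fun n => Real.rpow_nonneg (by positivity) _
    have step3 : (∑' j : ℤ × ℤ, Fz p c j.1 * Fz p c j.2) = (1+2*G)^2 := by
      rw [hGdef]; exact twoD hp hc0
    have step4 : G ≤ D/c := by
      rw [hGdef, hDdef]; exact G_le_of_le_one hp hc0 hcle
    have step5 : (1+2*G)^2 ≤ (1+2*D)^2/c^2 := by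
      have h7 : (1:ℝ) ≤ 1/c := by rw [le_div_iff₀ hc0]; linarith
      have h6 : 1+2*G ≤ (1+2*D)/c := by
        have e : (1+2*D)/c = 1/c + 2*(D/c) := by ring
        rw [e]; linarith [step4]
      calc (1+2*G)^2 ≤ ((1+2*D)/c)^2 := pow_le_pow_left₀ (by linarith) h6 2
        _ = (1+2*D)^2/c^2 := by rw [div_pow]
    have hc2b : (b:ℝ)^2/(16*L^2) ≤ c^2 := by
      have h8 := pow_le_pow_left₀ (by positivity) hcb 2
      calc (b:ℝ)^2/(16*L^2) = ((b:ℝ)/(4*L))^2 := by rw [div_pow]; ring_nf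
        _ ≤ c^2 := h8
    have hinv0 : 1/c^2 ≤ 16*L^2/(b:ℝ)^2 := by
      rw [div_le_div_iff₀ (by positivity) (by positivity)]
      have e : (b:ℝ)^2/(16*L^2)*(16*L^2) = (b:ℝ)^2 := by field_simp
      have h1 := mul_le_mul_of_nonneg_right hc2b (by positivity : (0:ℝ) ≤ 16*L^2)
      linarith
    have hfin1 : (1+2*D)^2/c^2 ≤ K1 * (L^2/(b:ℝ)^2) := by
      calc (1+2*D)^2/c^2 = (1+2*D)^2 * (1/c^2) := by ring
        _ ≤ (1+2*D)^2 * (16*L^2/(b:ℝ)^2) :=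
            mul_le_mul_of_nonneg_left hinv0 (by positivity)
        _ = K1 * (L^2/(b:ℝ)^2) := by rw [hK1def]; ring
    have hS_A : (∑' j : {j : ℤ × ℤ // j ≠ 0},
        jap (r + (a : ℝ) • latt L j.1 + (b : ℝ) • rot (latt L j.1)) ^ (-σ))
        ≤ K1 * (L^2/(b:ℝ)^2) := by
      calc _ ≤ ∑' j : {j : ℤ × ℤ // j ≠ 0}, Fz p c j.1.1 * Fz p c j.1.2 := step1
        _ ≤ ∑' j : ℤ × ℤ, Fz p c j.1 * Fz p c j.2 := step2
        _ = (1+2*G)^2 := step3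
        _ ≤ (1+2*D)^2/c^2 := step5
        _ ≤ K1 * (L^2/(b:ℝ)^2) := hfin1
    have hb4L : (b:ℝ) ≤ 4*L := by
      have h9 : s ≤ 4*L := by
        rw [hc] at hcle
        exact (div_le_one (by positivity)).1 hcle
      linarith [hbs]
    have hAB : L^2/(b:ℝ)^2 ≤ 4^σ * (L^σ/(b:ℝ)^σ) := by
      rw [eA, eB]
      have hx4 : 1/4 ≤ L/(b:ℝ) := by
        rw [div_le_div_iff₀ (by norm_num) hb0]
        linarith
      have h1 : (L/(b:ℝ))^((2:ℝ)-σ) ≤ (1/4:ℝ)^((2:ℝ)-σ) :=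
        Real.rpow_le_rpow_of_nonpos (by norm_num) hx4 (by linarith)
      have h2 : ((1/4:ℝ))^((2:ℝ)-σ) ≤ 4^σ := by
        rw [one_div, Real.inv_rpow (by norm_num : (0:ℝ) ≤ 4),
          ← Real.rpow_neg (by norm_num : (0:ℝ) ≤ 4)]
        exact Real.rpow_le_rpow_of_exponent_le (by norm_num) (by linarith)
      have h3 : (L/(b:ℝ))^((2:ℝ)) = (L/(b:ℝ))^((2:ℝ)-σ) * (L/(b:ℝ))^σ := by
        rw [← Real.rpow_add hx0]; congr 1; ring
      rw [h42, h3]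
      exact mul_le_mul_of_nonneg_right (h1.trans h2) (Real.rpow_nonneg hx0.le σ)
    rcases le_total (L^2/(b:ℝ)^2) (L^σ/(b:ℝ)^σ) with hmin | hmin
    · rw [min_eq_left hmin]
      exact hS_A.trans (mul_le_mul_of_nonneg_right hC1 hA0)
    · rw [min_eq_right hmin]
      calc _ ≤ K1 * (L^2/(b:ℝ)^2) := hS_A
        _ ≤ K1 * (4^σ * (L^σ/(b:ℝ)^σ)) := mul_le_mul_of_nonneg_left hAB hK10.le
        _ = (K1*4^σ) * (L^σ/(b:ℝ)^σ) := by ring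
        _ ≤ C * (L^σ/(b:ℝ)^σ) := mul_le_mul_of_nonneg_right hC2 hB0
  · -- case 1 < c
    have hc1 : (1:ℝ) ≤ c := hcgt.le
    have hH1 := H_summable (p := p) (c := 1) hp one_pos
    have hH1' : Summable (fun j : ℤ × ℤ => 2^p * c^(-σ) * (Fz p 1 j.1 * Fz p 1 j.2)) :=
      hH1.mul_left _
    have hHs : Summable (fun j : {j : ℤ × ℤ // j ≠ 0} =>
        2^p * c^(-σ) * (Fz p 1 j.1.1 * Fz p 1 j.1.2)) :=
      hH1'.subtype {j : ℤ × ℤ | j ≠ 0}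
    have hgS : Summable (fun j : {j : ℤ × ℤ // j ≠ 0} =>
        jap (r + (a : ℝ) • latt L j.1 + (b : ℝ) • rot (latt L j.1)) ^ (-σ)) :=
      Summable.of_nonneg_of_le (fun j => hg0 j.1) (fun j => hg2 hc1 j.1 j.2) hHs
    have step1 : (∑' j : {j : ℤ × ℤ // j ≠ 0},
        jap (r + (a : ℝ) • latt L j.1 + (b : ℝ) • rot (latt L j.1)) ^ (-σ))
        ≤ ∑' j : {j : ℤ × ℤ // j ≠ 0}, 2^p * c^(-σ) * (Fz p 1 j.1.1 * Fz p 1 j.1.2) :=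
      Summable.tsum_le_tsum (fun j => hg2 hc1 j.1 j.2) hgS hHs
    have step2 : (∑' j : {j : ℤ × ℤ // j ≠ 0}, 2^p * c^(-σ) * (Fz p 1 j.1.1 * Fz p 1 j.1.2))
        = 2^p * c^(-σ) * ∑' j : {j : ℤ × ℤ // j ≠ 0}, Fz p 1 j.1.1 * Fz p 1 j.1.2 :=
      tsum_mul_left
    have step3 : (∑' j : {j : ℤ × ℤ // j ≠ 0}, Fz p 1 j.1.1 * Fz p 1 j.1.2)
        ≤ ∑' j : ℤ × ℤ, Fz p 1 j.1 * Fz p 1 j.2 :=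
      Summable.tsum_subtype_le (fun j : ℤ × ℤ => Fz p 1 j.1 * Fz p 1 j.2) {j | j ≠ 0}
        (fun j => mul_nonneg (Fz_nonneg _ _ _) (Fz_nonneg _ _ _)) hH1
    set G1 : ℝ := ∑' n : ℕ, (1 + (1:ℝ)^2*((n:ℝ)+1)^2)^(-(p/2)) with hG1def
    have hG10 : 0 ≤ G1 := by
      rw [hG1def]
      exact tsum_nonneg fun n => Real.rpow_nonneg (by positivity) _
    have step4 : (∑' j : ℤ × ℤ, Fz p 1 j.1 * Fz p 1 j.2) = (1+2*G1)^2 := by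
      rw [hG1def]; exact twoD hp one_pos
    have hG1Z : G1 ≤ Z := by
      rw [hG1def, hZdef]; exact G_le_of_one_le hp le_rfl
    have step5 : (1+2*G1)^2 ≤ (1+2*Z)^2 :=
      pow_le_pow_left₀ (by linarith) (by linarith) 2
    have hcσ0 : (0:ℝ) ≤ c^(-σ) := Real.rpow_nonneg hc0.le _
    have hS_pre : (∑' j : {j : ℤ × ℤ // j ≠ 0},
        jap (r + (a : ℝ) • latt L j.1 + (b : ℝ) • rot (latt L j.1)) ^ (-σ))
        ≤ K2 * c^(-σ) := by
      calc _ ≤ ∑' j : {j : ℤ × ℤ // j ≠ 0},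
            2^p * c^(-σ) * (Fz p 1 j.1.1 * Fz p 1 j.1.2) := step1
        _ = 2^p * c^(-σ) * ∑' j : {j : ℤ × ℤ // j ≠ 0}, Fz p 1 j.1.1 * Fz p 1 j.1.2 :=
            step2
        _ ≤ 2^p * c^(-σ) * ((1+2*Z)^2) := by
            apply mul_le_mul_of_nonneg_left _ (by positivity)
            calc (∑' j : {j : ℤ × ℤ // j ≠ 0}, Fz p 1 j.1.1 * Fz p 1 j.1.2)
                ≤ ∑' j : ℤ × ℤ, Fz p 1 j.1 * Fz p 1 j.2 := step3
              _ = (1+2*G1)^2 := step4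
              _ ≤ (1+2*Z)^2 := step5
        _ = K2 * c^(-σ) := by rw [hK2def]; ring
    have hcB : c^(-σ) ≤ 4^σ * (L^σ/(b:ℝ)^σ) := by
      have hb4L0 : (0:ℝ) < (b:ℝ)/(4*L) := by positivity
      have h1 : c^(-σ) ≤ ((b:ℝ)/(4*L))^(-σ) :=
        Real.rpow_le_rpow_of_nonpos hb4L0 hcb (by linarith)
      have h2 : ((b:ℝ)/(4*L))^(-σ) = 4^σ * (L^σ/(b:ℝ)^σ) := by
        rw [Real.rpow_neg hb4L0.le, ← Real.inv_rpow hb4L0.le, inv_div]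
        rw [show (4*L)/(b:ℝ) = 4*(L/(b:ℝ)) from by ring]
        rw [Real.mul_rpow (by norm_num) hx0.le, eB]
      exact h1.trans_eq h2
    have hS_B : (∑' j : {j : ℤ × ℤ // j ≠ 0},
        jap (r + (a : ℝ) • latt L j.1 + (b : ℝ) • rot (latt L j.1)) ^ (-σ))
        ≤ (K2*4^σ) * (L^σ/(b:ℝ)^σ) := by
      calc _ ≤ K2 * c^(-σ) := hS_pre
        _ ≤ K2 * (4^σ * (L^σ/(b:ℝ)^σ)) := mul_le_mul_of_nonneg_left hcB hK20.le
        _ = (K2*4^σ) * (L^σ/(b:ℝ)^σ) := by ring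
    have hBA : L^σ/(b:ℝ)^σ ≤ L^2/(b:ℝ)^2 := by
      have h9 : 4*L < s := by
        rw [hc] at hcgt
        have := (one_lt_div (by positivity : (0:ℝ) < 4*L)).1 hcgt
        linarith
      have hbL : L ≤ (b:ℝ) := by linarith [hs2b]
      have hx1 : L/(b:ℝ) ≤ 1 := by rw [div_le_one hb0]; linarith
      rw [eA, eB, h42]
      exact Real.rpow_le_rpow_of_exponent_ge hx0 hx1 (by linarith)
    rcases le_total (L^2/(b:ℝ)^2) (L^σ/(b:ℝ)^σ) with hmin | hmin
    · rw [min_eq_left hmin]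
      calc _ ≤ (K2*4^σ) * (L^σ/(b:ℝ)^σ) := hS_B
        _ ≤ (K2*4^σ) * (L^2/(b:ℝ)^2) :=
            mul_le_mul_of_nonneg_left hBA (by positivity)
        _ ≤ C * (L^2/(b:ℝ)^2) := mul_le_mul_of_nonneg_right hC3 hA0
    · rw [min_eq_right hmin]
      exact hS_B.trans (mul_le_mul_of_nonneg_right hC3 hB0)
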